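/- For every ε ∈ (0, 1/2), the cardinal 𝔢_ubd^{fr} satisfies 𝔢_ubd^{fr} ≤ 𝔰_{1/2±ε}; hence 𝔢_ubd^{fr} ≤ inf over ε of the ε-almost bisecting numbers. -/

import Mathlib

open Filter Cardinal

/-- `𝔢^{fr}_ubd`: the least cardinality of a bounded family `F ⊆ ω^ω` such
that every `g ∈ ω^ω` is everywhere different from some member of `F`. -/
noncomputable def eFr : Cardinal :=
  sInf {c : Cardinal | ∃ F : Set (ℕ → ℕ),
    (∃ h : ℕ → ℕ, ∀ f ∈ F, ∀ n, f n ≤ h n) ∧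
    (∀ g : ℕ → ℕ, ∃ f ∈ F, ∀ n, f n ≠ g n) ∧ #F = c}

/-- `S` ε-almost bisects `X`: for all but finitely many `n`, the relative
density of `S` in `X ∩ n` lies in `(1/2 - ε, 1/2 + ε)`. -/
def AlmostBisects (ε : ℝ) (S X : Set ℕ) : Prop :=
  {n : ℕ | ((S ∩ X ∩ Set.Iio n).ncard : ℝ) / ((X ∩ Set.Iio n).ncard) ∉
      Set.Ioo (1 / 2 - ε) (1 / 2 + ε)}.Finite

/-- The ε-almost bisecting number `𝔰_{1/2±ε}`. -/
noncomputable def sEps (ε : ℝ) : Cardinal :=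
  sInf {c : Cardinal | ∃ F : Set (Set ℕ), (∀ S ∈ F, S.Infinite) ∧
    (∀ X : Set ℕ, X.Infinite → ∃ S ∈ F, AlmostBisects ε S X) ∧ #F = c}


section Ratio
variable {ε : ℝ} {K : ℕ} (hε0 : 0 < ε) (hε2 : ε < 1/2)
  (hK : (1/2 + ε) ≤ K * (1/2 - ε))

include hε0 hε2 hK in
lemma Kpos : 0 < K := by
  by_contra h
  push_neg at h
  interval_cases K <;> simp at hK <;> linarith

include hε0 hε2 hK in
lemma ratio_hi {p q num : ℕ} (hq : K * (p+1) ≤ q) (hnum : q ≤ num) :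
    ((num : ℝ) / ((p + q : ℕ) : ℝ)) ∉ Set.Ioo (1/2 - ε) (1/2 + ε) := by
  have hKpos := Kpos hε0 hε2 hK
  have hqpos : 0 < q := lt_of_lt_of_le (by positivity) hq
  have hden : (0:ℝ) < ((p + q : ℕ) : ℝ) := by positivity
  have hq' : ((K:ℝ) * (p+1)) ≤ q := by exact_mod_cast hq
  have hnum' : (q:ℝ) ≤ num := by exact_mod_cast hnum
  have key : (1/2 + ε) * ((p + q : ℕ) : ℝ) ≤ num := by
    push_cast
    nlinarith [hK, hq', hnum', hε0, hε2]
  intro hmem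
  have := hmem.2
  rw [div_lt_iff₀ hden] at this
  linarith

include hε0 hε2 hK in
lemma ratio_lo {p q num : ℕ} (hq : K * (p+1) ≤ q) (hnum : num ≤ p) :
    ((num : ℝ) / ((p + q : ℕ) : ℝ)) ∉ Set.Ioo (1/2 - ε) (1/2 + ε) := by
  have hKpos := Kpos hε0 hε2 hK
  have hqpos : 0 < q := lt_of_lt_of_le (by positivity) hq
  have hden : (0:ℝ) < ((p + q : ℕ) : ℝ) := by positivity
  have hq' : ((K:ℝ) * (p+1)) ≤ q := by exact_mod_cast hq
  have hnum' : (num:ℝ) ≤ p := by exact_mod_cast hnum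
  have key : (num : ℝ) ≤ (1/2 - ε) * ((p + q : ℕ) : ℝ) := by
    push_cast
    nlinarith [hK, hq', hnum', hε0, hε2]
  intro hmem
  have := hmem.1
  rw [lt_div_iff₀ hden] at this
  linarith

end Ratio


section Blocks
variable {P : ℕ → Finset ℕ} {a : ℕ → ℕ}
  (hmono : Monotone a) (hP : ∀ j, (P j : Set ℕ) ⊆ Set.Ico (a j) (a (j+1)))

include hmono hP in
lemma blocks_inter_Iio (m : ℕ) :
    (⋃ j, (P j : Set ℕ)) ∩ Set.Iio (a m) = ↑((Finset.range m).biUnion P) := by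
  ext x
  simp only [Set.mem_inter_iff, Set.mem_iUnion, Finset.coe_biUnion, Finset.mem_coe,
    Finset.mem_range, Set.mem_Iio, Set.mem_iUnion, Finset.mem_coe]
  constructor
  · rintro ⟨⟨j, hj⟩, hx⟩
    refine ⟨j, ?_, hj⟩
    by_contra h
    push_neg at h
    exact absurd ((hmono h).trans (hP j hj).1) (by omega)
  · rintro ⟨j, hjm, hj⟩
    exact ⟨⟨j, hj⟩, lt_of_lt_of_le (hP j hj).2 (hmono hjm)⟩

include hmono hP in
lemma blocks_disjoint {i j : ℕ} (hij : i ≠ j) : Disjoint (P i) (P j) := by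
  wlog h : i < j generalizing i j
  · exact (this hij.symm (by omega)).symm
  refine Finset.disjoint_left.2 fun x hxi hxj => ?_
  have h1 := (hP i hxi).2
  have h2 := (hP j hxj).1
  have := hmono (show i + 1 ≤ j by omega)
  omega

include hmono hP in
lemma blocks_card (m : ℕ) :
    ((Finset.range m).biUnion P).card = ∑ j ∈ Finset.range m, (P j).card :=
  Finset.card_biUnion fun i _ j _ hij => blocks_disjoint hmono hP hij

include hmono hP in
lemma blocks_ncard (m : ℕ) :
    ((⋃ j, (P j : Set ℕ)) ∩ Set.Iio (a m)).ncard = ∑ j ∈ Finset.range m, (P j).card := by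
  rw [blocks_inter_Iio hmono hP m, Set.ncard_coe_finset, blocks_card hmono hP]

include hmono hP in
lemma blocks_infinite (hne : ∀ j, (P j).Nonempty) (hub : ∀ j, j ≤ a j) :
    (⋃ j, (P j : Set ℕ)).Infinite := by
  refine Set.infinite_of_forall_exists_gt fun n => ?_
  obtain ⟨x, hx⟩ := hne (n+1)
  exact ⟨x, Set.mem_iUnion.2 ⟨n+1, hx⟩, by have := (hP _ hx).1; have := hub (n+1); omega⟩

end Blocks

section Checkpoint
variable {ε : ℝ} {K : ℕ} (hε0 : 0 < ε) (hε2 : ε < 1/2)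
  (hK : (1/2 + ε) ≤ K * (1/2 - ε))
variable {P : ℕ → Finset ℕ} {a : ℕ → ℕ}
  (hmono : Monotone a) (hP : ∀ j, (P j : Set ℕ) ⊆ Set.Ico (a j) (a (j+1)))

include hε0 hε2 hK hmono hP in
lemma checkpoint_bad (S : Set ℕ) (m : ℕ)
    (hq : K * ((∑ j ∈ Finset.range m, (P j).card) + 1) ≤ (P m).card)
    (hext : (P m : Set ℕ) ⊆ S ∨ Disjoint (P m : Set ℕ) S) :
    ((S ∩ (⋃ j, (P j : Set ℕ)) ∩ Set.Iio (a (m+1))).ncard : ℝ) /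
      (((⋃ j, (P j : Set ℕ)) ∩ Set.Iio (a (m+1))).ncard) ∉
      Set.Ioo (1/2 - ε) (1/2 + ε) := by
  set X := ⋃ j, (P j : Set ℕ) with hX
  set p := ∑ j ∈ Finset.range m, (P j).card with hp
  set q := (P m).card with hqdef
  have hden : (X ∩ Set.Iio (a (m+1))).ncard = p + q := by
    rw [blocks_ncard hmono hP (m+1), Finset.sum_range_succ]
  have hXfin : (X ∩ Set.Iio (a (m+1))).Finite := by
    rw [blocks_inter_Iio hmono hP (m+1)]; exact Finset.finite_toSet _
  rw [hden]
  rcases hext with hsub | hdisj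
  · -- P m ⊆ S : numerator ≥ q
    have hsub2 : (P m : Set ℕ) ⊆ S ∩ X ∩ Set.Iio (a (m+1)) := by
      intro x hx
      refine ⟨⟨hsub hx, Set.mem_iUnion.2 ⟨m, hx⟩⟩, ?_⟩
      exact (hP m hx).2
    have hnum : q ≤ (S ∩ X ∩ Set.Iio (a (m+1))).ncard := by
      rw [hqdef, ← Set.ncard_coe_finset (P m)]
      exact Set.ncard_le_ncard hsub2 (hXfin.subset (by intro x hx; exact ⟨hx.1.2, hx.2⟩))
    exact ratio_hi hε0 hε2 hK hq hnum
  · -- P m disjoint from S : numerator ≤ p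
    have hsub2 : S ∩ X ∩ Set.Iio (a (m+1)) ⊆ ↑((Finset.range m).biUnion P) := by
      intro x hx
      have hx2 : x ∈ X ∩ Set.Iio (a (m+1)) := ⟨hx.1.2, hx.2⟩
      rw [blocks_inter_Iio hmono hP (m+1)] at hx2
      simp only [Finset.coe_biUnion, Set.mem_iUnion, Finset.mem_coe,
        Finset.mem_range] at hx2 ⊢
      obtain ⟨j, hjm, hj⟩ := hx2
      refine ⟨j, ?_, hj⟩
      rcases Nat.lt_succ_iff_lt_or_eq.1 hjm with h | rfl
      · exact h
      · exact absurd hx.1.1 (Set.disjoint_left.1 hdisj hj)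
    have hnum : (S ∩ X ∩ Set.Iio (a (m+1))).ncard ≤ p := by
      calc (S ∩ X ∩ Set.Iio (a (m+1))).ncard
          ≤ ((Finset.range m).biUnion P : Set ℕ).ncard :=
            Set.ncard_le_ncard hsub2 (Finset.finite_toSet _)
        _ = p := by rw [Set.ncard_coe_finset, blocks_card hmono hP]
    exact ratio_lo hε0 hε2 hK hq hnum

end Checkpoint


lemma card_filter_even (m : ℕ) :
    ((Finset.range m).filter (fun i => i % 2 = 0)).card = (m+1)/2 := by
  induction m with
  | zero => simp
  | succ m ih =>
    rw [Finset.range_add_one, Finset.filter_insert]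
    by_cases h : m % 2 = 0
    · rw [if_pos h, Finset.card_insert_of_notMem (by simp), ih]; omega
    · rw [if_neg h, ih]; omega

/-- Every infinite `X` is ε-almost bisected by an infinite set, namely the
"even-indexed" elements of `X`. -/
lemma exists_bisector {ε : ℝ} (hε0 : 0 < ε) (X : Set ℕ) (hX : X.Infinite) :
    ∃ S : Set ℕ, S.Infinite ∧ AlmostBisects ε S X := by
  classical
  set p : ℕ → Prop := fun x => x ∈ X with hp
  have hXp : (setOf p).Infinite := hX
  set N := Nat.nth p with hN
  have hNinj : Function.Injective N := (Nat.nth_strictMono hXp).injective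
  set S : Set ℕ := N '' {i | i % 2 = 0} with hS
  have hSinf : S.Infinite := by
    refine Set.infinite_of_injective_forall_mem (f := fun k : ℕ => N (2*k))
      (fun i j hij => by have := hNinj hij; omega) (fun k => ⟨2*k, by simp only [Set.mem_setOf_eq]; omega, rfl⟩)
  refine ⟨S, hSinf, ?_⟩
  -- key counting facts
  have hinter : ∀ n, X ∩ Set.Iio n = N '' (Set.Iio (Nat.count p n)) := by
    intro n
    ext x
    constructor
    · rintro ⟨hx, hxn⟩
      refine ⟨Nat.count p x, ?_, Nat.nth_count hx⟩
      have : Nat.count p (x+1) ≤ Nat.count p n := Nat.count_monotone p (Nat.succ_le_of_lt hxn)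
      rw [Nat.count_succ, if_pos hx] at this
      simp only [Set.mem_Iio]; omega
    · rintro ⟨i, hi, rfl⟩
      exact ⟨Nat.nth_mem_of_infinite hXp i, Nat.nth_lt_of_lt_count hi⟩
  have hinterS : ∀ n, S ∩ X ∩ Set.Iio n = N '' ({i | i % 2 = 0} ∩ Set.Iio (Nat.count p n)) := by
    intro n
    rw [Set.inter_assoc, hinter n]
    exact (Set.image_inter hNinj).symm
  -- ncards
  have hden : ∀ n, (X ∩ Set.Iio n).ncard = Nat.count p n := by
    intro n
    rw [hinter n, Set.ncard_image_of_injective _ hNinj]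
    have : Set.Iio (Nat.count p n) = ↑(Finset.range (Nat.count p n)) := by
      ext i; simp
    rw [this, Set.ncard_coe_finset, Finset.card_range]
  have hnum : ∀ n, (S ∩ X ∩ Set.Iio n).ncard = (Nat.count p n + 1)/2 := by
    intro n
    rw [hinterS n, Set.ncard_image_of_injective _ hNinj]
    have : {i | i % 2 = 0} ∩ Set.Iio (Nat.count p n) =
        ↑((Finset.range (Nat.count p n)).filter (fun i => i % 2 = 0)) := by
      ext i; simp [Set.mem_Iio, and_comm]
    rw [this, Set.ncard_coe_finset, card_filter_even]
  -- choose threshold M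
  obtain ⟨M, hM⟩ := exists_nat_gt (1/(2*ε))
  have hgood : ∀ n, M < Nat.count p n →
      ((S ∩ X ∩ Set.Iio n).ncard : ℝ) / ((X ∩ Set.Iio n).ncard) ∈
        Set.Ioo (1/2 - ε) (1/2 + ε) := by
    intro n hn
    rw [hnum n, hden n]
    set m := Nat.count p n with hm
    have hmpos : 0 < m := by omega
    have h1 : (m:ℝ) / 2 ≤ ((m+1)/2 : ℕ) := by
      have : m ≤ 2 * ((m+1)/2) := by omega
      have := (Nat.cast_le (α := ℝ)).2 this
      push_cast at this ⊢
      linarith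
    have h2 : (((m+1)/2 : ℕ) : ℝ) ≤ (m+1) / 2 := by
      have : 2 * ((m+1)/2) ≤ m + 1 := by omega
      have := (Nat.cast_le (α := ℝ)).2 this
      push_cast at this ⊢
      linarith
    have hmR : (0:ℝ) < m := by exact_mod_cast hmpos
    have hMm : (1/(2*ε)) < (m:ℝ) := lt_of_lt_of_le hM (by exact_mod_cast by omega)
    constructor
    · have : (1/2 : ℝ) ≤ ((m+1)/2 : ℕ) / m := by
        rw [le_div_iff₀ hmR]; linarith
      linarith
    · rw [div_lt_iff₀ hmR]
      have hε2 : (0:ℝ) < 2*ε := by linarith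
      have : (1:ℝ) < 2*ε*m := by
        rw [div_lt_iff₀ hε2] at hMm; linarith [hMm]
      nlinarith [h2]
  -- bad set is finite
  have : {n : ℕ | ((S ∩ X ∩ Set.Iio n).ncard : ℝ) / ((X ∩ Set.Iio n).ncard) ∉
      Set.Ioo (1/2 - ε) (1/2 + ε)} ⊆ Set.Iio (N (M+1) + 1) := by
    intro n hn
    simp only [Set.mem_setOf_eq] at hn
    by_contra h
    simp only [Set.mem_Iio, not_lt] at h
    refine hn (hgood n ?_)
    have : Nat.count p (N (M+1)) + 1 ≤ Nat.count p n := by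
      have h2 : Nat.count p (N (M+1) + 1) ≤ Nat.count p n := Nat.count_monotone p h
      rw [Nat.count_succ, if_pos (Nat.nth_mem_of_infinite hXp (M+1))] at h2
      omega
    rw [Nat.count_nth_of_infinite hXp] at this
    omega
  exact Set.Finite.subset (Set.finite_Iio _) this


section Pats
variable (K : ℕ)

/-- block sizes -/
def cfn (m : ℕ) : ℕ := K * (K+1)^m

/-- interval endpoints -/
def afn (m : ℕ) : ℕ := ∑ j ∈ Finset.range m, 2 * cfn K j

lemma afn_succ (m : ℕ) : afn K (m+1) = afn K m + 2 * cfn K m := by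
  simp [afn, Finset.sum_range_succ]

lemma afn_mono : Monotone (afn K) := by
  apply monotone_nat_of_le_succ
  intro m; rw [afn_succ]; omega

lemma sum_cfn (m : ℕ) : ∑ j ∈ Finset.range m, cfn K j = (K+1)^m - 1 := by
  induction m with
  | zero => simp
  | succ m ih =>
    rw [Finset.sum_range_succ, ih, cfn, pow_succ]
    have h1 : 1 ≤ (K+1)^m := Nat.one_le_pow _ _ (by omega)
    have h2 : (K+1)^m * (K+1) = (K+1)^m + K*(K+1)^m := by ring
    omega

lemma cfn_eq_K_mul (m : ℕ) : cfn K m = K * ((∑ j ∈ Finset.range m, cfn K j) + 1) := by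
  rw [sum_cfn, cfn]
  have h1 : 1 ≤ (K+1)^m := Nat.one_le_pow _ _ (by omega)
  rw [Nat.sub_add_cancel h1]

variable (hK1 : 1 ≤ K)

include hK1 in
lemma cfn_pos (m : ℕ) : 0 < cfn K m := by
  have : 1 ≤ (K+1)^m := Nat.one_le_pow _ _ (by omega)
  simp only [cfn]; positivity

include hK1 in
lemma le_afn (m : ℕ) : m ≤ afn K m := by
  induction m with
  | zero => simp
  | succ m ih => rw [afn_succ]; have := cfn_pos K hK1 m; omega

/-- the Finset interval for block m -/
def Ifn (m : ℕ) : Finset ℕ := Finset.Ico (afn K m) (afn K (m+1))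

lemma Ifn_card (m : ℕ) : (Ifn K m).card = 2 * cfn K m := by
  simp [Ifn, afn_succ]

/-- list of all candidate patterns on block m -/
noncomputable def patList (m : ℕ) : List (Finset ℕ) :=
  ((Ifn K m).powersetCard (cfn K m)).toList

include hK1 in
lemma patList_len : ∀ m, 2 ≤ (patList K m).length := by
  intro m
  rw [patList, Finset.length_toList]
  have hc := cfn_pos K hK1 m
  refine Finset.one_lt_card.2 ?_
  have h1 : Finset.Ico (afn K m) (afn K m + cfn K m) ∈ (Ifn K m).powersetCard (cfn K m) := by
    rw [Finset.mem_powersetCard]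
    constructor
    · intro x hx
      simp only [Finset.mem_Ico] at hx
      simp only [Ifn, Finset.mem_Ico, afn_succ]
      omega
    · simp
  have h2 : Finset.Ico (afn K m + cfn K m) (afn K m + 2 * cfn K m) ∈
      (Ifn K m).powersetCard (cfn K m) := by
    rw [Finset.mem_powersetCard]
    constructor
    · intro x hx
      simp only [Finset.mem_Ico] at hx
      simp only [Ifn, Finset.mem_Ico, afn_succ]
      omega
    · simp; omega
  refine ⟨_, h1, _, h2, ?_⟩
  intro h
  have : afn K m ∈ Finset.Ico (afn K m) (afn K m + cfn K m) := by
    simp only [Finset.mem_Ico]; omega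
  rw [h] at this
  simp only [Finset.mem_Ico] at this
  omega

/-- the v-th pattern on block m -/
noncomputable def pat (m v : ℕ) : Finset ℕ :=
  (patList K m).getD (v % (patList K m).length) ∅

/-- bound on codes -/
noncomputable def hfn (m : ℕ) : ℕ := (patList K m).length - 1

include hK1 in
lemma pat_mem (m v : ℕ) : pat K m v ∈ (Ifn K m).powersetCard (cfn K m) := by
  have hlen := patList_len K hK1 m
  have hlt : v % (patList K m).length < (patList K m).length := Nat.mod_lt _ (by omega)
  rw [pat, List.getD_eq_getElem _ _ hlt]
  have : (patList K m)[v % (patList K m).length] ∈ patList K m := List.getElem_mem _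
  simpa only [patList, Finset.mem_toList] using this

include hK1 in
lemma pat_subset (m v : ℕ) : (pat K m v : Set ℕ) ⊆ Set.Ico (afn K m) (afn K (m+1)) := by
  have := (Finset.mem_powersetCard.1 (pat_mem K hK1 m v)).1
  intro x hx
  have := this hx
  simpa [Ifn, Set.mem_Ico] using (by simpa [Ifn] using this : x ∈ Finset.Ico (afn K m) (afn K (m+1)))

include hK1 in
lemma pat_card (m v : ℕ) : (pat K m v).card = cfn K m :=
  (Finset.mem_powersetCard.1 (pat_mem K hK1 m v)).2

include hK1 in
lemma pat_le_hfn (m v : ℕ) (hv : v ≤ hfn K m) : pat K m v = (patList K m).getD v ∅ := by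
  have hlen := patList_len K hK1 m
  rw [pat, Nat.mod_eq_of_lt (by simp only [hfn] at hv; omega)]

include hK1 in
lemma pat_surj (m : ℕ) (Q : Finset ℕ) (hQ : Q ∈ (Ifn K m).powersetCard (cfn K m)) :
    ∃ v ≤ hfn K m, pat K m v = Q := by
  have hlen := patList_len K hK1 m
  rw [← Finset.mem_toList, ← patList] at hQ
  obtain ⟨i, hi, hQ⟩ := List.getElem_of_mem hQ
  refine ⟨i, by simp only [hfn]; omega, ?_⟩
  rw [pat, Nat.mod_eq_of_lt hi, List.getD_eq_getElem _ _ hi, hQ]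

include hK1 in
lemma exists_extreme (m : ℕ) (S : Set ℕ) :
    ∃ v ≤ hfn K m, ((pat K m v : Set ℕ) ⊆ S ∨ Disjoint (pat K m v : Set ℕ) S) := by
  classical
  set c := cfn K m
  set I := Ifn K m
  set T := I.filter (fun x => x ∈ S) with hT
  by_cases hc : c ≤ T.card
  · obtain ⟨Q, hQsub, hQcard⟩ := Finset.exists_subset_card_eq hc
    have hQmem : Q ∈ I.powersetCard c :=
      Finset.mem_powersetCard.2 ⟨hQsub.trans (Finset.filter_subset _ _), hQcard⟩
    obtain ⟨v, hv, hpv⟩ := pat_surj K hK1 m Q hQmem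
    refine ⟨v, hv, Or.inl ?_⟩
    rw [hpv]
    intro x hx
    exact (Finset.mem_filter.1 (hQsub hx)).2
  · set T' := I.filter (fun x => ¬ (x ∈ S)) with hT'
    have hsum : T.card + T'.card = I.card := Finset.card_filter_add_card_filter_not _
    have hIc : I.card = 2 * c := Ifn_card K m
    have hc' : c ≤ T'.card := by omega
    obtain ⟨Q, hQsub, hQcard⟩ := Finset.exists_subset_card_eq hc'
    have hQmem : Q ∈ I.powersetCard c :=
      Finset.mem_powersetCard.2 ⟨hQsub.trans (Finset.filter_subset _ _), hQcard⟩
    obtain ⟨v, hv, hpv⟩ := pat_surj K hK1 m Q hQmem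
    refine ⟨v, hv, Or.inr ?_⟩
    rw [hpv]
    rw [Set.disjoint_left]
    intro x hx
    exact (Finset.mem_filter.1 (hQsub hx)).2

include hK1 in
lemma hfn_pos (m : ℕ) : 1 ≤ hfn K m := by
  have := patList_len K hK1 m
  simp only [hfn]; omega

end Pats

lemma countable_eventually_eq (v : ℕ → ℕ) :
    {f : ℕ → ℕ | {m | f m ≠ v m}.Finite}.Countable := by
  classical
  have hsub : {f : ℕ → ℕ | {m | f m ≠ v m}.Finite} ⊆
      ⋃ (s : Finset ℕ), {f : ℕ → ℕ | ∀ m, m ∉ s → f m = v m} := by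
    intro f hf
    refine Set.mem_iUnion.2 ⟨hf.toFinset, fun m hm => ?_⟩
    by_contra h
    exact hm (by simpa using h)
  refine Set.Countable.mono hsub (Set.countable_iUnion fun s => ?_)
  rw [← Set.countable_coe_iff]
  refine Function.Injective.countable
    (f := fun (f : {f : ℕ → ℕ | ∀ m, m ∉ s → f m = v m}) => (fun i : s => f.1 i)) ?_
  rintro ⟨f, hf⟩ ⟨g, hg⟩ h
  have h' : ∀ m ∈ s, f m = g m := fun m hm => congrFun h ⟨m, hm⟩
  refine Subtype.ext (funext fun m => ?_)
  show f m = g m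
  by_cases hm : m ∈ s
  · exact h' m hm
  · rw [hf m hm, hg m hm]

lemma main_le {ε : ℝ} (hε0 : 0 < ε) (hε2 : ε < 1/2) (𝒮 : Set (Set ℕ))
    (hbis : ∀ X : Set ℕ, X.Infinite → ∃ S ∈ 𝒮, AlmostBisects ε S X)
    (hℵ : ℵ₀ ≤ #𝒮) : eFr ≤ #𝒮 := by
  classical
  obtain ⟨K, hKd⟩ := exists_nat_ge ((1/2 + ε)/(1/2 - ε))
  have hKR : (1/2 + ε) ≤ K * (1/2 - ε) := by
    rw [div_le_iff₀ (by linarith)] at hKd; linarith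
  have hK1 : 1 ≤ K := Kpos hε0 hε2 hKR
  -- the "bad value" function
  have hext := fun (S : Set ℕ) (m : ℕ) => exists_extreme K hK1 m S
  set vS : Set ℕ → ℕ → ℕ := fun S m => (hext S m).choose with hvS
  have vS_le : ∀ S m, vS S m ≤ hfn K m := fun S m => (hext S m).choose_spec.1
  have vS_ext : ∀ S m, ((pat K m (vS S m) : Set ℕ) ⊆ S ∨
      Disjoint (pat K m (vS S m) : Set ℕ) S) := fun S m => (hext S m).choose_spec.2
  set F : Set (ℕ → ℕ) := ⋃ S ∈ 𝒮,
    {f | (∀ m, f m ≤ hfn K m) ∧ {m | f m ≠ vS S m}.Finite} with hF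
  have hFcard : #F ≤ #𝒮 := by
    refine le_trans (Cardinal.mk_biUnion_le _ _) ?_
    have hsup : ⨆ (S : 𝒮), #({f | (∀ m, f m ≤ hfn K m) ∧ {m | f m ≠ vS S.1 m}.Finite} : Set (ℕ → ℕ)) ≤ ℵ₀ := by
      refine ciSup_le' fun S => ?_
      rw [Cardinal.mk_le_aleph0_iff, Set.countable_coe_iff]
      exact Set.Countable.mono (fun f hf => hf.2) (countable_eventually_eq _)
    calc #𝒮 * _ ≤ #𝒮 * ℵ₀ := mul_le_mul_right hsup _
      _ = #𝒮 := Cardinal.mul_eq_left hℵ hℵ Cardinal.aleph0_ne_zero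
  refine le_trans (csInf_le' ?_) hFcard
  refine ⟨F, ⟨hfn K, ?_⟩, ?_, rfl⟩
  · intro f hf
    simp only [hF, Set.mem_iUnion] at hf
    obtain ⟨S, _, hf⟩ := hf
    exact hf.1
  · -- the covering property
    intro g
    set g' : ℕ → ℕ := fun m => min (g m) (hfn K m) with hg'
    set P : ℕ → Finset ℕ := fun m => pat K m (g' m) with hPdef
    have hP : ∀ j, (P j : Set ℕ) ⊆ Set.Ico (afn K j) (afn K (j+1)) :=
      fun j => pat_subset K hK1 j (g' j)
    have hXinf : (⋃ j, (P j : Set ℕ)).Infinite := by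
      refine blocks_infinite (afn_mono K) hP (fun j => Finset.card_pos.1 ?_) (le_afn K hK1)
      rw [hPdef]; rw [pat_card K hK1]; exact cfn_pos K hK1 j
    obtain ⟨S, hS𝒮, hbi⟩ := hbis _ hXinf
    -- the agreement set is finite
    have hAfin : {m | g' m = vS S m}.Finite := by
      have hinj : Function.Injective (fun m => afn K (m+1)) := by
        have : StrictMono (fun m => afn K (m+1)) := by
          apply strictMono_nat_of_lt_succ
          intro m
          simp only [afn_succ]
          have := cfn_pos K hK1 (m+1)
          omega
        exact this.injective
      refine Set.Finite.subset (Set.Finite.preimage hinj.injOn hbi) ?_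
      intro m hm
      simp only [Set.mem_setOf_eq] at hm
      simp only [Set.mem_preimage, Set.mem_setOf_eq]
      have hq : K * ((∑ j ∈ Finset.range m, (P j).card) + 1) ≤ (P m).card := by
        have hsum : ∑ j ∈ Finset.range m, (P j).card = ∑ j ∈ Finset.range m, cfn K j :=
          Finset.sum_congr rfl fun j _ => pat_card K hK1 j (g' j)
        rw [hsum, hPdef, pat_card K hK1, ← cfn_eq_K_mul]
      have hx : (P m : Set ℕ) ⊆ S ∨ Disjoint (P m : Set ℕ) S := by
        rw [hPdef]
        simp only
        rw [hm]
        exact vS_ext S m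
      exact checkpoint_bad hε0 hε2 hKR (afn_mono K) hP S m hq hx
    -- build the evading function
    set f : ℕ → ℕ := fun m => if g' m = vS S m then (if vS S m = 0 then 1 else 0) else vS S m
      with hfdef
    have hfle : ∀ m, f m ≤ hfn K m := by
      intro m
      simp only [hfdef]
      split
      · split
        · exact hfn_pos K hK1 m
        · exact Nat.zero_le _
      · exact vS_le S m
    refine ⟨f, ?_, ?_⟩
    · simp only [hF, Set.mem_iUnion]
      refine ⟨S, hS𝒮, hfle, Set.Finite.subset hAfin ?_⟩
      intro m hm
      simp only [Set.mem_setOf_eq, hfdef] at hm ⊢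
      by_contra h
      rw [if_neg h] at hm
      exact hm rfl
    · intro m
      have hne : f m ≠ g' m := by
        simp only [hfdef]
        split
        · rename_i h
          rw [h]
          split
          · rename_i h0; rw [h0]; omega
          · rename_i h0; omega
        · rename_i h
          exact fun hc => h hc.symm
      by_cases hg : g m ≤ hfn K m
      · have : g' m = g m := min_eq_left hg
        rw [← this]; exact hne
      · have : f m ≤ hfn K m := hfle m
        omega

/-- one step of the diagonalization: a finite chunk of `S` above `b` of size `k` -/
noncomputable def dStep (S : Set ℕ) (hS : S.Infinite) (b k : ℕ) : Finset ℕ :=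
  ((hS.diff (Set.finite_Iio b)).exists_subset_ncard_eq k).choose_spec.2.1.toFinset

lemma dStep_spec (S : Set ℕ) (hS : S.Infinite) (b k : ℕ) :
    ((dStep S hS b k : Set ℕ) ⊆ S \ Set.Iio b) ∧ (dStep S hS b k).card = k := by
  have h := ((hS.diff (Set.finite_Iio b)).exists_subset_ncard_eq k).choose_spec
  refine ⟨?_, ?_⟩
  · rw [dStep, Set.Finite.coe_toFinset]; exact h.1
  · rw [← Set.ncard_coe_finset, dStep, Set.Finite.coe_toFinset]; exact h.2.2

/-- state of the diagonalization: accumulated finset and current bound -/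
noncomputable def diagSt (e : ℕ → Set ℕ) (hS : ∀ i, (e i).Infinite) (K : ℕ) :
    ℕ → Finset ℕ × ℕ
  | 0 => (∅, 0)
  | (j+1) =>
    let p := diagSt e hS K j
    let t := dStep (e (Nat.unpair j).1) (hS _) p.2 (K * (p.1.card + 1))
    (p.1 ∪ t, max p.2 (t.sup id + 1))

/-- the block added at step j -/
noncomputable def dP (e : ℕ → Set ℕ) (hS : ∀ i, (e i).Infinite) (K : ℕ) (j : ℕ) : Finset ℕ :=
  dStep (e (Nat.unpair j).1) (hS _) (diagSt e hS K j).2 (K * ((diagSt e hS K j).1.card + 1))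

section Diag
variable (e : ℕ → Set ℕ) (hS : ∀ i, (e i).Infinite) (K : ℕ)

lemma diagSt_succ (j : ℕ) :
    diagSt e hS K (j+1) = ((diagSt e hS K j).1 ∪ dP e hS K j,
      max (diagSt e hS K j).2 ((dP e hS K j).sup id + 1)) := rfl

lemma dP_card (j : ℕ) : (dP e hS K j).card = K * ((diagSt e hS K j).1.card + 1) :=
  (dStep_spec _ _ _ _).2

lemma dP_subset (j : ℕ) : (dP e hS K j : Set ℕ) ⊆ e (Nat.unpair j).1 \ Set.Iio (diagSt e hS K j).2 :=
  (dStep_spec _ _ _ _).1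

lemma dP_Ico (j : ℕ) :
    (dP e hS K j : Set ℕ) ⊆ Set.Ico ((diagSt e hS K j).2) ((diagSt e hS K (j+1)).2) := by
  intro x hx
  have h1 := (dP_subset e hS K j) hx
  have h2 : x ≤ (dP e hS K j).sup id := Finset.le_sup (f := id) hx
  rw [diagSt_succ]
  simp only [Set.mem_Ico]
  constructor
  · have := h1.2; simp only [Set.mem_Iio, not_lt] at this; exact this
  · simp only [lt_max_iff]; right; omega

lemma diagSt_mono : Monotone (fun j => (diagSt e hS K j).2) := by
  apply monotone_nat_of_le_succ
  intro j
  rw [diagSt_succ]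
  exact le_max_left _ _

lemma diagSt_fst (j : ℕ) : (diagSt e hS K j).1 = (Finset.range j).biUnion (dP e hS K) := by
  induction j with
  | zero => simp [diagSt]
  | succ j ih =>
    rw [Finset.range_add_one, Finset.biUnion_insert, diagSt_succ, ← ih]
    exact Finset.union_comm _ _

variable (hK1 : 1 ≤ K)

include hK1 in
lemma dP_nonempty (j : ℕ) : (dP e hS K j).Nonempty := by
  rw [← Finset.card_pos, dP_card]
  positivity

include hK1 in
lemma diagSt_lt (j : ℕ) : (diagSt e hS K j).2 < (diagSt e hS K (j+1)).2 := by
  obtain ⟨x, hx⟩ := dP_nonempty e hS K hK1 j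
  have := dP_Ico e hS K j hx
  simp only [Set.mem_Ico] at this
  omega

include hK1 in
lemma le_diagSt (j : ℕ) : j ≤ (diagSt e hS K j).2 := by
  induction j with
  | zero => omega
  | succ j ih => have := diagSt_lt e hS K hK1 j; omega

end Diag

lemma no_finite_family {ε : ℝ} {K : ℕ} (hε0 : 0 < ε) (hε2 : ε < 1/2)
    (hKR : (1/2 + ε) ≤ K * (1/2 - ε)) (hK1 : 1 ≤ K)
    (e : ℕ → Set ℕ) (hS : ∀ i, (e i).Infinite) :
    ∃ X : Set ℕ, X.Infinite ∧ ∀ i, ¬ AlmostBisects ε (e i) X := by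
  set P : ℕ → Finset ℕ := dP e hS K with hPdef
  set a : ℕ → ℕ := fun j => (diagSt e hS K j).2 with hadef
  have hmono : Monotone a := diagSt_mono e hS K
  have hP : ∀ j, (P j : Set ℕ) ⊆ Set.Ico (a j) (a (j+1)) := dP_Ico e hS K
  set X : Set ℕ := ⋃ j, (P j : Set ℕ) with hX
  have hXinf : X.Infinite :=
    blocks_infinite hmono hP (dP_nonempty e hS K hK1) (le_diagSt e hS K hK1)
  refine ⟨X, hXinf, ?_⟩
  intro i hbi
  obtain ⟨N, hN⟩ := hbi.bddAbove
  set j := Nat.pair i (N+1) with hj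
  have hq : K * ((∑ l ∈ Finset.range j, (P l).card) + 1) ≤ (P j).card := by
    rw [hPdef]
    rw [dP_card, diagSt_fst, blocks_card hmono hP]
  have hext : (P j : Set ℕ) ⊆ e i ∨ Disjoint (P j : Set ℕ) (e i) := by
    left
    intro x hx
    have := (dP_subset e hS K j) hx
    rw [hj, Nat.unpair_pair] at this
    exact this.1
  have hbad := checkpoint_bad hε0 hε2 hKR hmono hP (e i) j hq hext
  have hmem : a (j+1) ∈ {n : ℕ | ((e i ∩ X ∩ Set.Iio n).ncard : ℝ) / ((X ∩ Set.Iio n).ncard) ∉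
      Set.Ioo (1 / 2 - ε) (1 / 2 + ε)} := hbad
  have hle : a (j+1) ≤ N := hN hmem
  have h1 : j + 1 ≤ a (j+1) := le_diagSt e hS K hK1 (j+1)
  have h2 : N + 1 ≤ j := Nat.right_le_pair i (N+1)
  omega


/-- for every `ε ∈ (0, 1/2)`, `𝔢^{fr}_ubd ≤ 𝔰_{1/2±ε}`; hence
`𝔢^{fr}_ubd` is at most the infimum of these cardinals. -/
theorem eFr_le_sEps :
    (∀ ε : ℝ, 0 < ε → ε < 1 / 2 → eFr ≤ sEps ε) ∧
    eFr ≤ ⨅ ε : Set.Ioo (0 : ℝ) (1 / 2), sEps ε := by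
  have main : ∀ ε : ℝ, 0 < ε → ε < 1 / 2 → eFr ≤ sEps ε := by
    intro ε hε0 hε2
    obtain ⟨K, hKd⟩ := exists_nat_ge ((1/2 + ε)/(1/2 - ε))
    have hKR : (1/2 + ε) ≤ K * (1/2 - ε) := by
      rw [div_le_iff₀ (by linarith)] at hKd; linarith
    have hK1 : 1 ≤ K := Kpos hε0 hε2 hKR
    have hne : {c : Cardinal | ∃ F : Set (Set ℕ), (∀ S ∈ F, S.Infinite) ∧
        (∀ X : Set ℕ, X.Infinite → ∃ S ∈ F, AlmostBisects ε S X) ∧ #F = c}.Nonempty := by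
      refine ⟨_, {S : Set ℕ | S.Infinite}, fun S hS => hS, fun X hX => ?_, rfl⟩
      obtain ⟨S, h1, h2⟩ := exists_bisector hε0 X hX
      exact ⟨S, h1, h2⟩
    show eFr ≤ sInf {c : Cardinal | ∃ F : Set (Set ℕ), (∀ S ∈ F, S.Infinite) ∧
        (∀ X : Set ℕ, X.Infinite → ∃ S ∈ F, AlmostBisects ε S X) ∧ #F = c}
    obtain ⟨𝒮, h1, h2, h3⟩ := csInf_mem hne
    rw [← h3]
    have hℵ : ℵ₀ ≤ #𝒮 := by
      by_contra h
      push_neg at h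
      have hfin : 𝒮.Finite := by rwa [Cardinal.lt_aleph0_iff_set_finite] at h
      rcases Set.eq_empty_or_nonempty 𝒮 with rfl | hne'
      · obtain ⟨S, hS, -⟩ := h2 Set.univ Set.infinite_univ
        exact absurd hS (Set.notMem_empty S)
      · obtain ⟨e, he⟩ := hfin.countable.exists_eq_range hne'
        have hSi : ∀ i, (e i).Infinite := fun i => h1 _ (he ▸ Set.mem_range_self i)
        obtain ⟨X, hXinf, hbad⟩ := no_finite_family hε0 hε2 hKR hK1 e hSi
        obtain ⟨S, hSmem, hb⟩ := h2 X hXinf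
        rw [he] at hSmem
        obtain ⟨i, rfl⟩ := hSmem
        exact hbad i hb
    exact main_le hε0 hε2 𝒮 h2 hℵ
  refine ⟨main, ?_⟩
  haveI : Nonempty (Set.Ioo (0:ℝ) (1/2)) := ⟨⟨1/4, by norm_num⟩⟩
  exact le_ciInf fun ε => main ε.1 ε.2.1 ε.2.2
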